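/- In the higher tetrahedral algebra Λ = Λ(m,λ), for each vertex i of Q the element X_i^m lies in the right socle of Λ, i.e., X_i^m θ = 0 for every arrow θ starting at i. Here X_1 = δηγ = νμα, X_2 = ρωβ = εξσ, X_3 = ανμ = σεξ, X_4 = γδη = βρω, X_5 = ηγδ = ξσε, X_6 = ωβρ = μαν. -/

import Mathlib

open scoped TensorProduct

namespace HigherTetrahedral

/-- The twelve arrows of the tetrahedral triangulation quiver. -/
inductive Arr : Type
  | nu | de | ep | rh | si | al | ga | be | xi | et | om | mu
  deriving DecidableEq

instance instFintypeArr : Fintype Arr :=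
  ⟨⟨[Arr.nu, Arr.de, Arr.ep, Arr.rh, Arr.si, Arr.al, Arr.ga, Arr.be, Arr.xi, Arr.et, Arr.om, Arr.mu], by decide⟩, fun x => by cases x <;> decide⟩

open Arr

/-- Source vertex of each arrow (vertex `v` is `⟨v-1⟩ : Fin 6`). -/
def src : Arr → Fin 6
  | nu => 0 | de => 0 | ep => 1 | rh => 1 | si => 2 | al => 2
  | ga => 3 | be => 3 | xi => 4 | et => 4 | om => 5 | mu => 5

/-- Target vertex of each arrow. -/
def tgt : Arr → Fin 6
  | nu => 5 | de => 4 | ep => 4 | rh => 5 | si => 1 | al => 0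
  | ga => 0 | be => 1 | xi => 2 | et => 3 | om => 3 | mu => 2

/-- The permutation `f` of arrows, with orbits (δ η γ), (ε ξ σ), (ρ ω β), (ν μ α). -/
def f : Arr → Arr
  | de => et | et => ga | ga => de
  | ep => xi | xi => si | si => ep
  | rh => om | om => be | be => rh
  | nu => mu | mu => al | al => nu

/-- The permutation `g`: `g θ` is the arrow starting at `tgt θ` other than `f θ`. -/
def g : Arr → Arr
  | de => xi | et => be | ga => nu
  | ep => et | xi => al | si => rh
  | rh => mu | om => ga | be => ep
  | nu => om | mu => si | al => de

variable (K : Type) [Field K]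

/-- The ambient free algebra on the vertices and arrows. -/
abbrev FreeTet := FreeAlgebra K ((Fin 6) ⊕ Arr)

/-- Generator corresponding to a vertex. -/
def V (i : Fin 6) : FreeTet K := FreeAlgebra.ι K (Sum.inl i)

/-- Generator corresponding to an arrow. -/
def A (θ : Arr) : FreeTet K := FreeAlgebra.ι K (Sum.inr θ)

variable (m : ℕ) (lam : K)

/-- The defining relations of the higher tetrahedral algebra `Λ(m,λ)`, together with
the path-algebra relations for the vertex idempotents. -/
inductive TetRel : FreeTet K → FreeTet K → Prop
  | idem (i j : Fin 6) : TetRel (V K i * V K j) (if i = j then V K i else 0)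
  | sum_one : TetRel (∑ i : Fin 6, V K i) 1
  | src_tgt (θ : Arr) : TetRel (V K (src θ) * A K θ * V K (tgt θ)) (A K θ)
  | rel_ga : TetRel (A K ga * A K de)
      (A K be * A K ep + lam • ((A K be * A K rh * A K om) ^ (m - 1) * (A K be * A K ep)))
  | rel_rh : TetRel (A K rh * A K om)
      (A K ep * A K et + lam • ((A K ep * A K xi * A K si) ^ (m - 1) * (A K ep * A K et)))
  | rel_xi : TetRel (A K xi * A K si)
      (A K et * A K be + lam • ((A K et * A K ga * A K de) ^ (m - 1) * (A K et * A K be)))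
  | rel_de : TetRel (A K de * A K et) (A K nu * A K om)
  | rel_om : TetRel (A K om * A K be) (A K mu * A K si)
  | rel_si : TetRel (A K si * A K ep) (A K al * A K de)
  | rel_et : TetRel (A K et * A K ga) (A K xi * A K al)
  | rel_be : TetRel (A K be * A K rh) (A K ga * A K nu)
  | rel_ep : TetRel (A K ep * A K xi) (A K rh * A K mu)
  | rel_nu : TetRel (A K nu * A K mu) (A K de * A K xi)
  | rel_mu : TetRel (A K mu * A K al) (A K om * A K ga)
  | rel_al : TetRel (A K al * A K nu) (A K si * A K rh)
  | zero_rel (θ : Arr) : TetRel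
      ((A K θ * A K (f θ) * A K (f (f θ))) ^ (m - 1) * (A K θ * A K (f θ)) * A K (g (f θ))) 0

/-- The higher tetrahedral algebra `Λ(m,λ)`. -/
abbrev Tet := RingQuot (TetRel K m lam)

/-- The idempotent of `Λ(m,λ)` at a vertex. -/
def e (i : Fin 6) : Tet K m lam := RingQuot.mkAlgHom K (TetRel K m lam) (V K i)

/-- The image in `Λ(m,λ)` of an arrow. -/
def a (θ : Arr) : Tet K m lam := RingQuot.mkAlgHom K (TetRel K m lam) (A K θ)

/-- The elements `X_i` (vertex `i+1` in the paper's numbering):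
`X₁ = δηγ`, `X₂ = ρωβ`, `X₃ = ανμ`, `X₄ = γδη`, `X₅ = ηγδ`, `X₆ = ωβρ`. -/
def X : Fin 6 → Tet K m lam
  | 0 => a K m lam de * a K m lam et * a K m lam ga
  | 1 => a K m lam rh * a K m lam om * a K m lam be
  | 2 => a K m lam al * a K m lam nu * a K m lam mu
  | 3 => a K m lam ga * a K m lam de * a K m lam et
  | 4 => a K m lam et * a K m lam ga * a K m lam de
  | 5 => a K m lam om * a K m lam be * a K m lam rh

/-- Product in `Λ(m,λ)` of a list of arrows (a path, read left to right). -/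
def pathProd (l : List Arr) : Tet K m lam := (l.map (a K m lam)).prod

/-- `IsPath i j l` : the list of arrows `l` is a (composable) path from vertex `i`
to vertex `j`. -/
def IsPath (i j : Fin 6) (l : List Arr) : Prop :=
  l ≠ [] ∧ l.Chain' (fun x y => tgt x = src y) ∧
    (∀ h : l ≠ [], src (l.head h) = i ∧ tgt (l.getLast h) = j)

end HigherTetrahedral


namespace HigherTetrahedral
open Arr


private lemma shift {R : Type*} [Monoid R] (x y : R) (n : ℕ) :
    (x * y) ^ n * x = x * (y * x) ^ n := by
  induction n with
  | zero => simp
  | succ n ih =>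
    rw [pow_succ, mul_assoc, mul_assoc x y x, ← mul_assoc, ih, mul_assoc, ← pow_succ]

private lemma pow_mul_alt {R : Type*} [Monoid R] (x y : R) (n : ℕ) :
    (x * y) ^ (n + 1) = x * ((y * x) ^ n * y) := by
  rw [pow_succ, ← mul_assoc, shift, mul_assoc]

private lemma gcase {R : Type*} [Ring R] (x y z w : R) (k : ℕ)
    (h : (y * z * x) ^ k * (y * z) * w = 0) : (x * y * z) ^ (k + 1) * w = 0 := by
  rw [mul_assoc, pow_mul_alt, mul_assoc x, h, mul_zero]

private lemma fcase {R : Type*} [Ring R] (x y z p q : R) (k : ℕ)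
    (hrel : z * x = p * q) (hz : (x * y * z) ^ k * (x * y) * p = 0) :
    (x * y * z) ^ (k + 1) * x = 0 := by
  rw [pow_succ, mul_assoc, mul_assoc (x*y) z x, hrel, ← mul_assoc (x*y) p q,
    ← mul_assoc, ← mul_assoc ((x*y*z)^k), hz, zero_mul]

private lemma fcaseL {K R : Type*} [CommSemiring K] [Ring R] [Algebra K R]
    (x y z p q u v : R) (c : K) (k : ℕ)
    (hrel : z * x = p * q + c • ((p * u * v) ^ k * (p * q)))
    (hz : (x * y * z) ^ k * (x * y) * p = 0) :
    (x * y * z) ^ (k + 1) * x = 0 := by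
  have e1 : (p * u * v) ^ k * (p * q) = p * ((u * v * p) ^ k * q) := by
    rw [mul_assoc p u v, ← mul_assoc ((p*(u*v))^k) p q, shift, mul_assoc, mul_assoc u v p]
  have key : ∀ s : R, (x*y*z)^k * ((x*y) * (p * s)) = ((x*y*z)^k * (x*y) * p) * s := by
    intro s
    rw [← mul_assoc (x*y) p s, ← mul_assoc, ← mul_assoc ((x*y*z)^k) (x*y) p]
  rw [pow_succ, mul_assoc, mul_assoc (x*y) z x, hrel, e1, mul_add (x*y),
    mul_smul_comm c (x*y), mul_add ((x*y*z)^k), mul_smul_comm c ((x*y*z)^k),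
    key q, key ((u*v*p)^k * q), hz, zero_mul, zero_mul, smul_zero, add_zero]


variable {K : Type} [Field K] {m : ℕ} {lam : K}

private lemma quot_rel {x y : FreeTet K} (h : TetRel K m lam x y) :
    RingQuot.mkAlgHom K (TetRel K m lam) x = RingQuot.mkAlgHom K (TetRel K m lam) y :=
  RingQuot.mkAlgHom_rel K h

private lemma rel2 {p q r s : Arr} (h : TetRel K m lam (A K p * A K q) (A K r * A K s)) :
    a K m lam p * a K m lam q = a K m lam r * a K m lam s := by
  simpa only [a, map_mul] using quot_rel h

private lemma relL {p q r s u v : Arr}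
    (h : TetRel K m lam (A K p * A K q)
      (A K r * A K s + lam • ((A K r * A K u * A K v) ^ (m - 1) * (A K r * A K s)))) :
    a K m lam p * a K m lam q = a K m lam r * a K m lam s
      + lam • ((a K m lam r * a K m lam u * a K m lam v) ^ (m - 1)
          * (a K m lam r * a K m lam s)) := by
  simpa only [a, map_mul, map_add, map_smul, map_pow] using quot_rel h

private lemma zrel (θ : Arr) :
    (a K m lam θ * a K m lam (f θ) * a K m lam (f (f θ))) ^ (m - 1)
      * (a K m lam θ * a K m lam (f θ)) * a K m lam (g (f θ)) = 0 := by
  have h := quot_rel (TetRel.zero_rel (K := K) (m := m) (lam := lam) θ)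
  simpa only [a, map_mul, map_pow, map_zero] using h

end HigherTetrahedral


open HigherTetrahedral Arr in
/-- For each vertex `i`, the element `X_i^m` lies in the right socle of `Λ(m,λ)`:
`X_i^m θ = 0` for every arrow `θ` starting at `i`. -/
theorem socle_pow (K : Type) [Field K] (m : ℕ) (hm : 2 ≤ m) (lam : K)
    (i : Fin 6) (θ : Arr) (hθ : src θ = i) :
    X K m lam i ^ m * a K m lam θ = 0 := by
  obtain ⟨k, rfl⟩ : ∃ k, m = k + 1 := ⟨m - 1, by omega⟩
  set aa := a K (k+1) lam with haa
  cases θ <;> subst hθ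
  case nu =>
    show (aa de * aa et * aa ga) ^ (k+1) * aa nu = 0
    exact gcase _ _ _ _ k (by simpa [f, g] using zrel (K := K) (m := k+1) (lam := lam) et)
  case de =>
    show (aa de * aa et * aa ga) ^ (k+1) * aa de = 0
    refine fcaseL _ _ _ (aa be) (aa ep) (aa rh) (aa om) lam k ?_ ?_
    · simpa using relL (TetRel.rel_ga (K := K) (m := k+1) (lam := lam))
    · simpa [f, g] using zrel (K := K) (m := k+1) (lam := lam) de
  case ep =>
    show (aa rh * aa om * aa be) ^ (k+1) * aa ep = 0
    exact gcase _ _ _ _ k (by simpa [f, g] using zrel (K := K) (m := k+1) (lam := lam) om)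
  case rh =>
    show (aa rh * aa om * aa be) ^ (k+1) * aa rh = 0
    refine fcase _ _ _ (aa ga) (aa nu) k ?_ ?_
    · exact rel2 (TetRel.rel_be (K := K) (m := k+1) (lam := lam))
    · simpa [f, g] using zrel (K := K) (m := k+1) (lam := lam) rh
  case si =>
    show (aa al * aa nu * aa mu) ^ (k+1) * aa si = 0
    exact gcase _ _ _ _ k (by simpa [f, g] using zrel (K := K) (m := k+1) (lam := lam) nu)
  case al =>
    show (aa al * aa nu * aa mu) ^ (k+1) * aa al = 0
    refine fcase _ _ _ (aa om) (aa ga) k ?_ ?_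
    · exact rel2 (TetRel.rel_mu (K := K) (m := k+1) (lam := lam))
    · simpa [f, g] using zrel (K := K) (m := k+1) (lam := lam) al
  case be =>
    show (aa ga * aa de * aa et) ^ (k+1) * aa be = 0
    exact gcase _ _ _ _ k (by simpa [f, g] using zrel (K := K) (m := k+1) (lam := lam) de)
  case ga =>
    show (aa ga * aa de * aa et) ^ (k+1) * aa ga = 0
    refine fcase _ _ _ (aa xi) (aa al) k ?_ ?_
    · exact rel2 (TetRel.rel_et (K := K) (m := k+1) (lam := lam))
    · simpa [f, g] using zrel (K := K) (m := k+1) (lam := lam) ga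
  case xi =>
    show (aa et * aa ga * aa de) ^ (k+1) * aa xi = 0
    exact gcase _ _ _ _ k (by simpa [f, g] using zrel (K := K) (m := k+1) (lam := lam) ga)
  case et =>
    show (aa et * aa ga * aa de) ^ (k+1) * aa et = 0
    refine fcase _ _ _ (aa nu) (aa om) k ?_ ?_
    · exact rel2 (TetRel.rel_de (K := K) (m := k+1) (lam := lam))
    · simpa [f, g] using zrel (K := K) (m := k+1) (lam := lam) et
  case mu =>
    show (aa om * aa be * aa rh) ^ (k+1) * aa mu = 0
    exact gcase _ _ _ _ k (by simpa [f, g] using zrel (K := K) (m := k+1) (lam := lam) be)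
  case om =>
    show (aa om * aa be * aa rh) ^ (k+1) * aa om = 0
    refine fcaseL _ _ _ (aa ep) (aa et) (aa xi) (aa si) lam k ?_ ?_
    · simpa using relL (TetRel.rel_rh (K := K) (m := k+1) (lam := lam))
    · simpa [f, g] using zrel (K := K) (m := k+1) (lam := lam) om
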